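/- Let 𝕜 be a complete nontrivially normed field, let V and W be complete normed 𝕜-vector spaces (Banach spaces over 𝕜), and let u : V → W be a continuous linear map whose cokernel W / range(u) is a finite-dimensional 𝕜-vector space. Then range(u) is a closed subspace of W and u is strict: for every open subset A ⊆ V, the image u(A) is open in range(u) with the subspace topology. -/

import Mathlib

/-- A continuous linear map `u : V → W` of Banach spaces over a complete nontrivially
normed field whose cokernel `W ⧸ range u` is finite-dimensional has closed range and is
strict: the image of every open subset of `V` is open in `range u` with the subspace
topology. -/
theorem isClosed_range_and_strict_of_finiteDimensional_coker
    {𝕜 V W : Type*} [NontriviallyNormedField 𝕜] [CompleteSpace 𝕜]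
    [NormedAddCommGroup V] [NormedSpace 𝕜 V] [CompleteSpace V]
    [NormedAddCommGroup W] [NormedSpace 𝕜 W] [CompleteSpace W]
    (u : V →L[𝕜] W)
    (hfd : FiniteDimensional 𝕜 (W ⧸ LinearMap.range (u : V →ₗ[𝕜] W))) :
    IsClosed (Set.range ⇑u) ∧
      ∀ A : Set V, IsOpen A →
        IsOpen ((Subtype.val ⁻¹' (⇑u '' A)) : Set (LinearMap.range (u : V →ₗ[𝕜] W))) := by
  -- choose an algebraic complement `q` of the range
  obtain ⟨q, hq⟩ := Submodule.exists_isCompl (LinearMap.range (u : V →ₗ[𝕜] W) : Submodule 𝕜 W)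
  haveI : FiniteDimensional 𝕜 q :=
    Module.Finite.equiv (Submodule.quotientEquivOfIsCompl _ q hq)
  haveI : CompleteSpace q := FiniteDimensional.complete 𝕜 q
  -- the map T : V × q → W, (v, s) ↦ u v + s is a continuous linear surjection of
  -- Banach spaces, hence open by the open mapping theorem
  set T : V × q →L[𝕜] W :=
    u.comp (ContinuousLinearMap.fst 𝕜 V q) +
      q.subtypeL.comp (ContinuousLinearMap.snd 𝕜 V q) with hT
  have hTsurj : Function.Surjective T := by
    intro w
    have hw : w ∈ (LinearMap.range (u : V →ₗ[𝕜] W)) ⊔ q := by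
      rw [hq.sup_eq_top]; trivial
    obtain ⟨x, hx, y, hy, hxy⟩ := Submodule.mem_sup.mp hw
    obtain ⟨v, hv⟩ := hx
    exact ⟨(v, ⟨y, hy⟩), by simp [hT, ← hxy, ← hv]⟩
  have hTopen : IsOpenMap T := T.isOpenMap hTsurj
  have hTquot : Topology.IsQuotientMap T := hTopen.isQuotientMap T.continuous hTsurj
  -- the preimage of the range under T is V × {0}, which is closed
  have hpre : T ⁻¹' (Set.range ⇑u) = Set.univ ×ˢ ({0} : Set q) := by
    ext ⟨v, s⟩
    simp only [Set.mem_preimage, Set.mem_prod, Set.mem_univ, Set.mem_singleton_iff, true_and]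
    constructor
    · rintro ⟨v', hv'⟩
      have hs : (s : W) ∈ (LinearMap.range (u : V →ₗ[𝕜] W)) ⊓ q := by
        refine ⟨⟨v' - v, ?_⟩, s.2⟩
        have h2 : u v' = u v + (s : W) := by simpa [hT] using hv'
        simp [map_sub, h2]
      rw [hq.inf_eq_bot] at hs
      exact Subtype.ext hs
    · rintro rfl
      exact ⟨v, by simp [hT]⟩
  have hclosed : IsClosed (Set.range ⇑u) := by
    rw [← hTquot.isClosed_preimage, hpre]
    exact isClosed_univ.prod isClosed_singleton
  refine ⟨hclosed, fun A hA => ?_⟩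
  -- corestrict u to its range; it is a surjection onto a Banach space, hence open
  haveI : CompleteSpace (LinearMap.range (u : V →ₗ[𝕜] W)) := hclosed.completeSpace_coe
  set u' : V →L[𝕜] (LinearMap.range (u : V →ₗ[𝕜] W)) :=
    u.codRestrict (LinearMap.range (u : V →ₗ[𝕜] W)) (fun v => LinearMap.mem_range_self (u : V →ₗ[𝕜] W) v) with hu'
  have hsurj' : Function.Surjective u' := by
    rintro ⟨w, v, hv⟩
    exact ⟨v, Subtype.ext hv⟩
  have himg : (Subtype.val ⁻¹' (⇑u '' A) : Set (LinearMap.range (u : V →ₗ[𝕜] W))) = u' '' A := by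
    ext x
    simp only [Set.mem_preimage, Set.mem_image]
    constructor
    · rintro ⟨a, ha, hax⟩
      exact ⟨a, ha, Subtype.ext hax⟩
    · rintro ⟨a, ha, rfl⟩
      exact ⟨a, ha, rfl⟩
  rw [himg]
  exact u'.isOpenMap hsurj' A hA
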